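/- Let p = 2n+1 be prime, let 𝒯 be the family of all subsets of ℤ_pⁿ of the form {(x₁,…,x₍ₙ₋₁₎, k + Σ_{i=1}^{n−1} εᵢ·(i+1)·xᵢ) : xᵢ ∈ ℤ_p} for some k ∈ ℤ_p and (ε₁,…,ε₍ₙ₋₁₎) ∈ {−1,1}^{n−1}. Then every S ∈ 𝒯 has a defining set for (S, 𝒯) of size at most 1 + ⌈(n−1)/⌊log₂ p⌋⌉: there exists D ⊆ S of that size such that S is the unique member of 𝒯 containing D. -/

import Mathlib

/-- The Cayley graph Γ(ℤ_{2n+1}ⁿ, 𝒰) with 𝒰 = {±e₁,…,±eₙ}. -/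
def cay (n : ℕ) : SimpleGraph (Fin n → ZMod (2 * n + 1)) where
  Adj x y := ∃ i : Fin n, x - y = Pi.single i 1 ∨ y - x = Pi.single i 1
  symm := by
    constructor
    rintro x y ⟨i, h | h⟩
    · exact ⟨i, Or.inr h⟩
    · exact ⟨i, Or.inl h⟩
  loopless := by
    constructor
    rintro x ⟨i, h | h⟩ <;>
    · have hn : 0 < n := i.pos
      haveI : Fact (1 < 2 * n + 1) := ⟨by omega⟩
      simp only [sub_self] at h
      have h1 := congrFun h i
      rw [Pi.zero_apply, Pi.single_eq_same] at h1
      exact one_ne_zero h1.symm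

instance (n : ℕ) : DecidableRel (cay n).Adj :=
  fun x y => Fintype.decidableExistsFintype (p := fun i : Fin n =>
    x - y = Pi.single i 1 ∨ y - x = Pi.single i 1)

/-- `S` is a dominating set of `G`. -/
def Dom {V : Type*} (G : SimpleGraph V) (S : Set V) : Prop :=
  ∀ v : V, ∃ u ∈ S, u = v ∨ G.Adj u v

/-- `S` is a perfect dominating set of `G`: every vertex is dominated by
exactly one element of `S`. -/
def PerfDom {V : Type*} (G : SimpleGraph V) (S : Set V) : Prop :=
  ∀ v : V, ∃! u : V, u ∈ S ∧ (u = v ∨ G.Adj u v)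

/-- The "linear" perfect dominating set determined by `k` and signs `ε`:
`{(x₁,…,xₙ₋₁, k + Σᵢ εᵢ·(i+1)·xᵢ)}` (0-based index `i : Fin m` has coefficient `i+2`). -/
def linSet (m : ℕ) (k : ZMod (2 * (m + 1) + 1)) (ε : Fin m → ZMod (2 * (m + 1) + 1)) :
    Set (Fin (m + 1) → ZMod (2 * (m + 1) + 1)) :=
  {v | v (Fin.last m) = k + ∑ i : Fin m, ε i * ((i : ℕ) + 2) * v i.castSucc}

/-- The family `𝒯` of all sets of the linear form. -/
def linFamily (m : ℕ) : Set (Set (Fin (m + 1) → ZMod (2 * (m + 1) + 1))) :=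
  {S | ∃ k ε, (∀ i, ε i = 1 ∨ ε i = -1) ∧ S = linSet m k ε}


/-- Auxiliary: a signed sum of distinct powers of 2 with coefficients of absolute
value at most 1 is zero only if all coefficients vanish. -/
lemma keyInt {ι : Type*} [DecidableEq ι] :
    ∀ (n : ℕ) (s : Finset ι), s.card = n →
    ∀ (r : ι → ℕ) (e : ι → ℤ),
    (∀ i ∈ s, ∀ j ∈ s, r i = r j → i = j) →
    (∀ i ∈ s, |e i| ≤ 1) →
    (∑ i ∈ s, e i * 2 ^ r i) = 0 → ∀ i ∈ s, e i = 0 := by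
  intro n
  induction n with
  | zero =>
    intro s hs r e _ _ _ i hi
    rw [Finset.card_eq_zero.mp hs] at hi
    exact absurd hi (Finset.notMem_empty i)
  | succ n ih =>
    intro s hs r e hinj he hsum i hi
    have hne : s.Nonempty := ⟨i, hi⟩
    obtain ⟨M, hM, hMmax⟩ := s.exists_max_image r hne
    have hsplit : e M * 2 ^ r M + ∑ j ∈ s.erase M, e j * 2 ^ r j = 0 := by
      rw [Finset.add_sum_erase s (fun j => e j * 2 ^ r j) hM]; exact hsum
    have hlt : ∀ j ∈ s.erase M, r j < r M := by
      intro j hj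
      have hjs := Finset.mem_of_mem_erase hj
      rcases lt_or_eq_of_le (hMmax j hjs) with h | h
      · exact h
      · exact absurd (hinj j hjs M hM h) (Finset.ne_of_mem_erase hj)
    have hrest : |∑ j ∈ s.erase M, e j * 2 ^ r j| ≤ 2 ^ r M - 1 := by
      calc |∑ j ∈ s.erase M, e j * 2 ^ r j| ≤ ∑ j ∈ s.erase M, |e j * 2 ^ r j| :=
            Finset.abs_sum_le_sum_abs _ _
        _ ≤ ∑ j ∈ s.erase M, 2 ^ r j := by
            apply Finset.sum_le_sum
            intro j hj
            rw [abs_mul, abs_pow, abs_two]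
            have h1 := he j (Finset.mem_of_mem_erase hj)
            nlinarith [pow_pos (by norm_num : (0:ℤ) < 2) (r j)]
        _ = ∑ x ∈ (s.erase M).image r, 2 ^ x := by
            rw [Finset.sum_image]
            intro a ha b hb hab
            exact hinj a (Finset.mem_of_mem_erase ha) b (Finset.mem_of_mem_erase hb) hab
        _ ≤ ∑ x ∈ Finset.range (r M), (2:ℤ) ^ x := by
            apply Finset.sum_le_sum_of_subset_of_nonneg
            · intro x hx
              obtain ⟨j, hj, rfl⟩ := Finset.mem_image.mp hx
              exact Finset.mem_range.mpr (hlt j hj)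
            · intro x _ _; positivity
        _ = 2 ^ r M - 1 := by
            have h := geom_sum_mul (2:ℤ) (r M)
            simpa using h
    have heM : e M = 0 := by
      by_contra h
      have h1 : 1 ≤ |e M| := Int.one_le_abs h
      have h2 : (2:ℤ) ^ r M ≤ |e M * 2 ^ r M| := by
        rw [abs_mul, abs_pow, abs_two]
        nlinarith [pow_pos (by norm_num : (0:ℤ) < 2) (r M)]
      have h3 : e M * 2 ^ r M = -∑ j ∈ s.erase M, e j * 2 ^ r j := by linarith
      rw [h3, abs_neg] at h2
      linarith
    have hrest0 : ∑ j ∈ s.erase M, e j * 2 ^ r j = 0 := by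
      rw [heM] at hsplit; simpa using hsplit
    have hcard : (s.erase M).card = n := by
      rw [Finset.card_erase_of_mem hM, hs]; rfl
    rcases eq_or_ne i M with rfl | hne'
    · exact heM
    · exact ih (s.erase M) hcard r e
        (fun a ha b hb => hinj a (Finset.mem_of_mem_erase ha) b (Finset.mem_of_mem_erase hb))
        (fun a ha => he a (Finset.mem_of_mem_erase ha)) hrest0 i
        (Finset.mem_erase.mpr ⟨hne', hi⟩)

/-- The point of `linSet m k ε` whose first `m` coordinates are `x`. -/
def ptAux (m : ℕ) (k : ZMod (2 * (m + 1) + 1)) (ε x : Fin m → ZMod (2 * (m + 1) + 1)) :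
    Fin (m + 1) → ZMod (2 * (m + 1) + 1) :=
  Fin.snoc x (k + ∑ i : Fin m, ε i * ((i : ℕ) + 2) * x i)

@[simp] lemma ptAux_castSucc (m : ℕ) (k : ZMod (2 * (m + 1) + 1))
    (ε x : Fin m → ZMod (2 * (m + 1) + 1)) (i : Fin m) :
    ptAux m k ε x i.castSucc = x i := Fin.snoc_castSucc _ _ _

@[simp] lemma ptAux_last (m : ℕ) (k : ZMod (2 * (m + 1) + 1))
    (ε x : Fin m → ZMod (2 * (m + 1) + 1)) :
    ptAux m k ε x (Fin.last m) = k + ∑ i : Fin m, ε i * ((i : ℕ) + 2) * x i :=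
  Fin.snoc_last _ _

lemma ptAux_mem (m : ℕ) (k : ZMod (2 * (m + 1) + 1))
    (ε x : Fin m → ZMod (2 * (m + 1) + 1)) : ptAux m k ε x ∈ linSet m k ε := by
  show ptAux m k ε x (Fin.last m) = _
  simp

/-- The special point used for block `b`. -/
noncomputable def xvAux (m t b : ℕ) : Fin m → ZMod (2 * (m + 1) + 1) := fun i =>
  if (i : ℕ) / t = b then (((i : ℕ) : ZMod (2 * (m + 1) + 1)) + 2)⁻¹ * 2 ^ ((i : ℕ) % t)
  else 0

lemma mem_linSet_iff (m : ℕ) (k : ZMod (2 * (m + 1) + 1))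
    (ε : Fin m → ZMod (2 * (m + 1) + 1)) (v : Fin (m + 1) → ZMod (2 * (m + 1) + 1)) :
    v ∈ linSet m k ε ↔
      v (Fin.last m) = k + ∑ i : Fin m, ε i * ((i : ℕ) + 2) * v i.castSucc := Iff.rfl

/-- For `p = 2n+1` prime (`n = m+1`), every member `S` of the family
`𝒯` of linear perfect dominating sets has a defining set for `(S, 𝒯)` of size at most
`1 + ⌈(n−1)/⌊log₂ p⌋⌉`. -/
theorem stmt13 (m : ℕ) (hp : Nat.Prime (2 * (m + 1) + 1))
    (S : Set (Fin (m + 1) → ZMod (2 * (m + 1) + 1))) (hS : S ∈ linFamily m) :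
    ∃ D ⊆ S, D.ncard ≤ 1 + m ⌈/⌉ Nat.log 2 (2 * (m + 1) + 1) ∧
      ∀ T ∈ linFamily m, D ⊆ T → T = S := by
  classical
  obtain ⟨k, ε, hε, rfl⟩ := hS
  haveI : Fact (Nat.Prime (2 * (m + 1) + 1)) := ⟨hp⟩
  set t : ℕ := Nat.log 2 (2 * (m + 1) + 1) with htdef
  have ht : 1 ≤ t := Nat.log_pos (by norm_num) (by omega)
  have hple : 2 ^ t ≤ 2 * (m + 1) + 1 := Nat.pow_log_le_self 2 (by omega)
  set B : ℕ := m ⌈/⌉ t with hBdef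
  have hmB : m ≤ t * B := by
    have := le_smul_ceilDiv (b := m) (show 0 < t by omega)
    simpa [hBdef, smul_eq_mul] using this
  have hC : ∀ i : Fin m, (((i : ℕ) : ZMod (2 * (m + 1) + 1)) + 2) ≠ 0 := by
    intro i hzero
    have h1 : ((((i : ℕ) + 2 : ℕ)) : ZMod (2 * (m + 1) + 1)) = 0 := by push_cast; exact hzero
    have h2 := (ZMod.natCast_eq_zero_iff _ _).mp h1
    have h3 : (i : ℕ) + 2 ≤ m + 1 := by have := i.isLt; omega
    have h4 := Nat.le_of_dvd (by omega) h2
    omega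
  refine ⟨insert (ptAux m k ε 0) ((fun b => ptAux m k ε (xvAux m t b)) '' ↑(Finset.range B)),
    ?_, ?_, ?_⟩
  · rintro v (rfl | ⟨b, _, rfl⟩)
    · exact ptAux_mem m k ε 0
    · exact ptAux_mem m k ε _
  · calc (insert (ptAux m k ε 0)
          ((fun b => ptAux m k ε (xvAux m t b)) '' ↑(Finset.range B))).ncard
        ≤ ((fun b => ptAux m k ε (xvAux m t b)) '' ↑(Finset.range B)).ncard + 1 :=
          Set.ncard_insert_le _ _
      _ ≤ (↑(Finset.range B) : Set ℕ).ncard + 1 := by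
          gcongr
          exact Set.ncard_image_le (Finset.range B).finite_toSet
      _ = 1 + B := by rw [Set.ncard_coe_finset, Finset.card_range, add_comm]
  · rintro T ⟨k', ε', hε', rfl⟩ hDT
    have hone : (1 : ZMod (2 * (m + 1) + 1)) ≠ -1 := by
      intro h
      have h2 : ((2 : ℕ) : ZMod (2 * (m + 1) + 1)) = 0 := by
        push_cast
        linear_combination h
      have h3 := (ZMod.natCast_eq_zero_iff _ _).mp h2
      have := Nat.le_of_dvd (by norm_num) h3
      omega
    have h0 : ptAux m k ε 0 ∈ linSet m k' ε' := hDT (Set.mem_insert _ _)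
    have hk : k' = k := by
      rw [mem_linSet_iff] at h0
      simpa using h0.symm
    have hεeq : ε' = ε := by
      funext i₀
      set b : ℕ := (i₀ : ℕ) / t with hbdef
      have hbB : b ∈ Finset.range B := by
        rw [Finset.mem_range, hbdef]
        have := i₀.isLt
        apply Nat.div_lt_of_lt_mul
        omega
      have hmem : ptAux m k ε (xvAux m t b) ∈ linSet m k' ε' :=
        hDT (Set.mem_insert_of_mem _ ⟨b, by simpa using hbB, rfl⟩)
      rw [mem_linSet_iff, hk] at hmem
      simp only [ptAux_castSucc, ptAux_last] at hmem
      have h2 : ∑ i : Fin m,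
          (ε i - ε' i) * (((i : ℕ) : ZMod (2 * (m + 1) + 1)) + 2) * xvAux m t b i = 0 := by
        have h := sub_eq_zero_of_eq hmem
        rw [add_sub_add_left_eq_sub, ← Finset.sum_sub_distrib] at h
        rw [← h]
        apply Finset.sum_congr rfl
        intro i _
        ring
      have h3 : ∑ i : Fin m,
          (if (i : ℕ) / t = b then (ε i - ε' i) * 2 ^ ((i : ℕ) % t) else 0) = 0 := by
        have hcongr : ∀ i ∈ (Finset.univ : Finset (Fin m)),
            (if (i : ℕ) / t = b then (ε i - ε' i) * 2 ^ ((i : ℕ) % t) else 0) =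
              (ε i - ε' i) * (((i : ℕ) : ZMod (2 * (m + 1) + 1)) + 2) * xvAux m t b i := ?_
        · rw [Finset.sum_congr rfl hcongr]
          exact h2
        intro i _
        by_cases h : (i : ℕ) / t = b
        · rw [if_pos h]
          simp only [xvAux]
          rw [if_pos h]
          have hc := hC i
          field_simp
        · rw [if_neg h]
          simp only [xvAux]
          rw [if_neg h, mul_zero]
      rw [← Finset.sum_filter] at h3
      set e : Fin m → ℤ := fun i =>
        if ε i = 1 then (if ε' i = 1 then 0 else 1) else (if ε' i = 1 then -1 else 0)
        with hedef
      have hcast : ∀ i : Fin m, ((2 * e i : ℤ) : ZMod (2 * (m + 1) + 1)) = ε i - ε' i := by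
        intro i
        rcases hε i with h1 | h1 <;> rcases hε' i with h2 | h2 <;>
          simp only [hedef, h1, h2, if_pos rfl, hone, hone.symm, if_neg, if_true] <;>
          push_cast <;> ring_nf <;> simp [h1, h2, hone, hone.symm] <;> ring
      set s : Finset (Fin m) := Finset.univ.filter (fun i : Fin m => (i : ℕ) / t = b)
        with hsdef
      have hNcast :
          ((2 * ∑ i ∈ s, e i * 2 ^ ((i : ℕ) % t) : ℤ) : ZMod (2 * (m + 1) + 1)) = 0 := by
        rw [← h3]
        rw [Finset.mul_sum]
        push_cast
        apply Finset.sum_congr rfl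
        intro i _
        have h := hcast i
        push_cast at h
        linear_combination (2 : ZMod (2 * (m + 1) + 1)) ^ ((i : ℕ) % t) * h
      have hdvd : ((2 * (m + 1) + 1 : ℕ) : ℤ) ∣ 2 * ∑ i ∈ s, e i * 2 ^ ((i : ℕ) % t) :=
        (ZMod.intCast_zmod_eq_zero_iff_dvd _ _).mp hNcast
      have hpInt : Prime ((2 * (m + 1) + 1 : ℕ) : ℤ) := Nat.prime_iff_prime_int.mp hp
      have hdvdM : ((2 * (m + 1) + 1 : ℕ) : ℤ) ∣ ∑ i ∈ s, e i * 2 ^ ((i : ℕ) % t) := by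
        rcases hpInt.dvd_mul.mp hdvd with h | h
        · exfalso
          have h5 := Int.le_of_dvd (by norm_num) h
          have hp3 : (3 : ℤ) ≤ ((2 * (m + 1) + 1 : ℕ) : ℤ) := by exact_mod_cast (by omega : 3 ≤ 2 * (m + 1) + 1)
          linarith
        · exact h
      have hinj : ∀ i ∈ s, ∀ j ∈ s, (i : ℕ) % t = (j : ℕ) % t → i = j := by
        intro i hi j hj hij
        rw [hsdef, Finset.mem_filter] at hi hj
        have h1 := Nat.div_add_mod (i : ℕ) t
        have h2 := Nat.div_add_mod (j : ℕ) t
        have h4 : (i : ℕ) = (j : ℕ) := by rw [← h1, ← h2, hi.2, hj.2, hij]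
        exact Fin.ext h4
      have heabs : ∀ i : Fin m, |e i| ≤ 1 := by
        intro i
        rw [hedef]
        dsimp only
        split_ifs <;> norm_num
      have habs : |∑ i ∈ s, e i * 2 ^ ((i : ℕ) % t)| ≤ 2 ^ t - 1 := by
        calc |∑ i ∈ s, e i * 2 ^ ((i : ℕ) % t)|
            ≤ ∑ i ∈ s, |e i * 2 ^ ((i : ℕ) % t)| := Finset.abs_sum_le_sum_abs _ _
          _ ≤ ∑ i ∈ s, 2 ^ ((i : ℕ) % t) := by
              apply Finset.sum_le_sum
              intro i _
              rw [abs_mul, abs_pow, abs_two]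
              have h1 := heabs i
              nlinarith [pow_pos (by norm_num : (0:ℤ) < 2) ((i : ℕ) % t)]
          _ = ∑ x ∈ s.image (fun i : Fin m => (i : ℕ) % t), 2 ^ x := by
              rw [Finset.sum_image]
              exact hinj
          _ ≤ ∑ x ∈ Finset.range t, (2:ℤ) ^ x := by
              apply Finset.sum_le_sum_of_subset_of_nonneg
              · intro x hx
                obtain ⟨j, _, rfl⟩ := Finset.mem_image.mp hx
                exact Finset.mem_range.mpr (Nat.mod_lt _ (by omega))
              · intro x _ _; positivity
          _ = 2 ^ t - 1 := by
              have h := geom_sum_mul (2:ℤ) t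
              simpa using h
      have hM0 : ∑ i ∈ s, e i * 2 ^ ((i : ℕ) % t) = 0 := by
        by_contra h
        have h5 := Int.le_of_dvd (abs_pos.mpr h) ((dvd_abs _ _).mpr hdvdM)
        have hpt : (2 : ℤ) ^ t ≤ ((2 * (m + 1) + 1 : ℕ) : ℤ) := by exact_mod_cast hple
        linarith
      have he0 : ∀ i ∈ s, e i = 0 :=
        keyInt s.card s rfl _ e hinj (fun i _ => heabs i) hM0
      have hi₀ : i₀ ∈ s := by
        rw [hsdef, Finset.mem_filter]
        exact ⟨Finset.mem_univ _, rfl⟩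
      have h6 := he0 i₀ hi₀
      rw [hedef] at h6
      dsimp only at h6
      rcases hε i₀ with h1 | h1 <;> rcases hε' i₀ with h2 | h2 <;>
        simp [h1, h2, hone, hone.symm] at h6 ⊢ <;> rw [h1, h2]
    rw [hk, hεeq]
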